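/- arXiv:math/0501515 — 2 statements merged into one kernel-verified Lean document; each statement's English description precedes it below -/
import Mathlib

section
/- Let k ∈ {1, 5} and let d₂ be an even integer. Then for every odd prime p, 360 divides 6·p²(p⁴ − 1)·d₂ + k²·p²(p² − 1)(p² − 4), and 12 divides p²(p² − 1). Setting d_p := (6·p²(p⁴ − 1)·d₂ + k²·p²(p² − 1)(p² − 4))/360 for odd primes p, the family on ℤ[x]/(x⁴) given by ψ_2(x) = 4x + kx² + d₂x³ and ψ_p(x) = p²x + (k·p²(p² − 1)/12)·x² + d_p·x³ for odd primes p is a filtered λ-ring structure on ℤ[x]/(x⁴). -/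
open Polynomial

noncomputable section

/-- The truncated polynomial ring `ℤ[x]/(xⁿ)`. -/
abbrev TP (n : ℕ) : Type := Polynomial ℤ ⧸ Ideal.span {(X : Polynomial ℤ) ^ n}

/-- The class of `x` in `ℤ[x]/(xⁿ)`. -/
def xx (n : ℕ) : TP n := Ideal.Quotient.mk _ (X : Polynomial ℤ)

/-- A filtered λ-ring structure on `ℤ[x]/(xⁿ)`, presented (via Wilkerson's theorem) as a
family of Adams operations `ψ p`, indexed by the primes `p`: each `ψ p` is a ring
endomorphism preserving the filtration ideal `(x)`, they pairwise commute, and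
`ψ p r ≡ r ^ p (mod p)`. -/
structure AdamsFamily (n : ℕ) : Type where
  ψ : Nat.Primes → (TP n →+* TP n)
  maps_ideal : ∀ (p : Nat.Primes), ∀ a ∈ Ideal.span {xx n}, ψ p a ∈ Ideal.span {xx n}
  comm : ∀ p q : Nat.Primes, (ψ p).comp (ψ q) = (ψ q).comp (ψ p)
  frob : ∀ (p : Nat.Primes) (a : TP n),
    ψ p a - a ^ (p : ℕ) ∈ Ideal.span {((p : ℕ) : TP n)}

/-- Isomorphism of filtered λ-ring structures on `ℤ[x]/(xⁿ)`: a filtration-preserving ring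
automorphism intertwining the Adams operations. -/
def AdamsIso {n : ℕ} (R S : AdamsFamily n) : Prop :=
  ∃ σ : TP n ≃+* TP n,
    (Ideal.span {xx n}).map σ.toRingHom = Ideal.span {xx n} ∧
    ∀ p : Nat.Primes, σ.toRingHom.comp (R.ψ p) = (S.ψ p).comp σ.toRingHom

/-- The prime 2 as an element of `Nat.Primes`. -/
def P2 : Nat.Primes := ⟨2, Nat.prime_two⟩

/-- The prime 3 as an element of `Nat.Primes`. -/
def P3 : Nat.Primes := ⟨3, Nat.prime_three⟩

/-! ### Auxiliary material -/

lemma hx4 : (xx 4) ^ 4 = 0 := by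
  rw [xx, ← map_pow]
  exact Ideal.Quotient.eq_zero_iff_mem.mpr (Ideal.subset_span rfl)

lemma mk_C_eq (a : ℤ) :
    (Ideal.Quotient.mk (Ideal.span {(X : Polynomial ℤ) ^ 4}) (C a) : TP 4) = (a : TP 4) := by
  rw [eq_intCast (Polynomial.C : ℤ →+* Polynomial ℤ) a, map_intCast]

lemma hom_ext {S : Type*} [Ring S] {f g : TP 4 →+* S} (h : f (xx 4) = g (xx 4)) : f = g := by
  refine Ideal.Quotient.ringHom_ext (Polynomial.ringHom_ext (fun a => ?_) ?_)
  · show f ((Ideal.Quotient.mk _) (C a)) = g ((Ideal.Quotient.mk _) (C a))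
    rw [mk_C_eq, map_intCast, map_intCast]
  · exact h

/-- The endomorphism of `ℤ[x]/(x⁴)` sending `x` to `f`, for `f` with `f ^ 4 = 0`. -/
def ψmap (f : TP 4) (hf : f ^ 4 = 0) : TP 4 →+* TP 4 :=
  Ideal.Quotient.lift _ (eval₂RingHom (Int.castRingHom (TP 4)) f) (by
    intro a ha
    rw [Ideal.mem_span_singleton] at ha
    obtain ⟨t, rfl⟩ := ha
    rw [map_mul, map_pow]
    simp [coe_eval₂RingHom, eval₂_X, hf])

lemma ψmap_x (f : TP 4) (hf : f ^ 4 = 0) : ψmap f hf (xx 4) = f := by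
  show Ideal.Quotient.lift _ _ _ (Ideal.Quotient.mk _ X) = f
  rw [Ideal.Quotient.lift_mk]
  simp [coe_eval₂RingHom]

/-- The element `A x + B x² + C x³` of `ℤ[x]/(x⁴)`. -/
def gen (A B C : ℤ) : TP 4 := (A : TP 4) * xx 4 + (B : TP 4) * xx 4 ^ 2 + (C : TP 4) * xx 4 ^ 3

lemma gen4 (A B C : ℤ) : gen A B C ^ 4 = 0 := by
  have h : gen A B C ^ 4
      = xx 4 ^ 4 * (((A : TP 4) + (B : TP 4) * xx 4 + (C : TP 4) * xx 4 ^ 2) ^ 4) := by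
    rw [gen]; ring
  rw [h, hx4, zero_mul]

/-- The endomorphism of `ℤ[x]/(x⁴)` sending `x` to `A x + B x² + C x³`. -/
def Ψ (A B C : ℤ) : TP 4 →+* TP 4 := ψmap (gen A B C) (gen4 A B C)

lemma Ψ_x (A B C : ℤ) : Ψ A B C (xx 4) = gen A B C := ψmap_x _ _

set_option maxHeartbeats 2000000 in
lemma Ψ_gen (A B C a b c : ℤ) :
    Ψ A B C (gen a b c)
      = gen (A * a) (a * B + b * A ^ 2) (a * C + 2 * b * A * B + c * A ^ 3) := by
  have h4 := hx4
  simp only [gen, map_add, map_mul, map_pow, map_intCast, Ψ_x]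
  push_cast
  linear_combination ((b : TP 4) * ((B : TP 4) ^ 2 + 2 * (A : TP 4) * (C : TP 4)
      + 2 * (B : TP 4) * (C : TP 4) * xx 4 + (C : TP 4) ^ 2 * xx 4 ^ 2)
    + (c : TP 4) * ((B : TP 4) + (C : TP 4) * xx 4)
      * (((A : TP 4) + (B : TP 4) * xx 4 + (C : TP 4) * xx 4 ^ 2) ^ 2
        + (A : TP 4) * ((A : TP 4) + (B : TP 4) * xx 4 + (C : TP 4) * xx 4 ^ 2)
        + (A : TP 4) ^ 2)) * h4

/-- The `x²`-coefficient of the Adams operation `ψ_p`. -/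
def Bco (k n : ℤ) : ℤ := k * (n ^ 2 * (n ^ 2 - 1) / 12)

/-- The `x³`-coefficient of the Adams operation `ψ_p`. -/
def Cco (k d2 n : ℤ) : ℤ :=
  (6 * n ^ 2 * (n ^ 4 - 1) * d2 + k ^ 2 * n ^ 2 * (n ^ 2 - 1) * (n ^ 2 - 4)) / 360

/-- The Adams operation `ψ_p`. -/
def fam (k d2 : ℤ) (p : Nat.Primes) : TP 4 →+* TP 4 :=
  Ψ (((p : ℕ) : ℤ) ^ 2) (Bco k ((p : ℕ) : ℤ)) (Cco k d2 ((p : ℕ) : ℤ))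

lemma fam_x (k d2 : ℤ) (p : Nat.Primes) :
    fam k d2 p (xx 4)
      = gen (((p : ℕ) : ℤ) ^ 2) (Bco k ((p : ℕ) : ℤ)) (Cco k d2 ((p : ℕ) : ℤ)) := Ψ_x _ _ _

lemma fam_gen (k d2 : ℤ) (p : Nat.Primes) (a b c : ℤ) :
    fam k d2 p (gen a b c)
      = gen ((((p : ℕ) : ℤ) ^ 2) * a)
          (a * Bco k ((p : ℕ) : ℤ) + b * (((p : ℕ) : ℤ) ^ 2) ^ 2)
          (a * Cco k d2 ((p : ℕ) : ℤ) + 2 * b * (((p : ℕ) : ℤ) ^ 2) * Bco k ((p : ℕ) : ℤ)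
            + c * (((p : ℕ) : ℤ) ^ 2) ^ 3) := Ψ_gen _ _ _ _ _ _

lemma d12 {n : ℤ} (h : Odd n) : (12 : ℤ) ∣ n ^ 2 * (n ^ 2 - 1) := by
  obtain ⟨m, rfl⟩ := h
  have key : ∀ y : ZMod 12, (2 * y + 1) ^ 2 * ((2 * y + 1) ^ 2 - 1) = 0 := by decide
  have h0 : (((2 * m + 1) ^ 2 * ((2 * m + 1) ^ 2 - 1) : ℤ) : ZMod 12) = 0 := by
    push_cast
    exact key _
  exact_mod_cast (ZMod.intCast_zmod_eq_zero_iff_dvd _ 12).mp h0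

lemma d30 {n : ℤ} (h : Odd n) : (30 : ℤ) ∣ n ^ 2 * (n ^ 4 - 1) := by
  obtain ⟨m, rfl⟩ := h
  have key : ∀ y : ZMod 30, (2 * y + 1) ^ 2 * ((2 * y + 1) ^ 4 - 1) = 0 := by decide
  have h0 : (((2 * m + 1) ^ 2 * ((2 * m + 1) ^ 4 - 1) : ℤ) : ZMod 30) = 0 := by
    push_cast
    exact key _
  exact_mod_cast (ZMod.intCast_zmod_eq_zero_iff_dvd _ 30).mp h0

set_option maxRecDepth 40000 in
lemma d360 {n : ℤ} (h : Odd n) : (360 : ℤ) ∣ n ^ 2 * (n ^ 2 - 1) * (n ^ 2 - 4) := by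
  obtain ⟨m, rfl⟩ := h
  have key : ∀ y : ZMod 360,
      (2 * y + 1) ^ 2 * ((2 * y + 1) ^ 2 - 1) * ((2 * y + 1) ^ 2 - 4) = 0 := by decide
  have h0 : (((2 * m + 1) ^ 2 * ((2 * m + 1) ^ 2 - 1) * ((2 * m + 1) ^ 2 - 4) : ℤ) : ZMod 360)
      = 0 := by
    push_cast
    exact key _
  exact_mod_cast (ZMod.intCast_zmod_eq_zero_iff_dvd _ 360).mp h0

lemma prime_big_not_dvd_12 {q : ℕ} (hq : q.Prime) (h5 : 5 ≤ q) : ¬ (q ∣ 12) := by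
  intro h
  rw [show (12 : ℕ) = 4 * 3 by norm_num] at h
  rcases (Nat.Prime.dvd_mul hq).mp h with h | h
  · have h2 : q ∣ 2 := hq.dvd_of_dvd_pow (n := 2) (by rwa [show (2 : ℕ) ^ 2 = 4 by norm_num])
    have := Nat.le_of_dvd (by norm_num) h2
    omega
  · have := Nat.le_of_dvd (by norm_num) h
    omega

lemma prime_big_not_dvd_360 {q : ℕ} (hq : q.Prime) (h5 : 5 ≤ q) (hne : q ≠ 5) : ¬ (q ∣ 360) := by
  intro h
  rw [show (360 : ℕ) = 8 * 45 by norm_num] at h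
  rcases (Nat.Prime.dvd_mul hq).mp h with h | h
  · have h2 : q ∣ 2 := hq.dvd_of_dvd_pow (n := 3) (by rwa [show (2 : ℕ) ^ 3 = 8 by norm_num])
    have := Nat.le_of_dvd (by norm_num) h2
    omega
  · rw [show (45 : ℕ) = 9 * 5 by norm_num] at h
    rcases (Nat.Prime.dvd_mul hq).mp h with h | h
    · have h3 : q ∣ 3 := hq.dvd_of_dvd_pow (n := 2) (by rwa [show (3 : ℕ) ^ 2 = 9 by norm_num])
      have := Nat.le_of_dvd (by norm_num) h3
      omega
    · exact hne ((Nat.prime_dvd_prime_iff_eq hq (by norm_num)).mp h)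

lemma frob_of_gen {pn : ℕ} (hp : pn.Prime) (φ : TP 4 →+* TP 4)
    (hgen : φ (xx 4) - xx 4 ^ pn ∈ Ideal.span {((pn : ℕ) : TP 4)}) :
    ∀ a : TP 4, φ a - a ^ pn ∈ Ideal.span {((pn : ℕ) : TP 4)} := by
  haveI : Fact pn.Prime := ⟨hp⟩
  set J := Ideal.span {((pn : ℕ) : TP 4)} with hJ
  have hpJ : ((pn : ℕ) : TP 4) ∈ J := Ideal.subset_span rfl
  have hint : ∀ m : ℤ, ((m : TP 4)) - (m : TP 4) ^ pn ∈ J := by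
    intro m
    have h1 : ((pn : ℤ)) ∣ m - m ^ pn := by
      have h0 : ((m - m ^ pn : ℤ) : ZMod pn) = 0 := by
        push_cast
        simp [ZMod.pow_card]
      exact (ZMod.intCast_zmod_eq_zero_iff_dvd _ pn).mp h0
    have h2 := map_dvd (Int.castRingHom (TP 4)) h1
    rw [Ideal.mem_span_singleton]
    have h3 : ((pn : ℕ) : TP 4) ∣ ((m - m ^ pn : ℤ) : TP 4) := by exact_mod_cast h2
    have h4 : ((m - m ^ pn : ℤ) : TP 4) = (m : TP 4) - (m : TP 4) ^ pn := by push_cast; ring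
    rwa [h4] at h3
  have hmul : ∀ u v : TP 4, (φ u - u ^ pn ∈ J) → (φ v - v ^ pn ∈ J) →
      (φ (u * v) - (u * v) ^ pn ∈ J) := by
    intro u v hu hv
    have h : φ (u * v) - (u * v) ^ pn = φ u * (φ v - v ^ pn) + v ^ pn * (φ u - u ^ pn) := by
      rw [map_mul]; ring
    rw [h]
    exact J.add_mem (J.mul_mem_left _ hv) (J.mul_mem_left _ hu)
  intro a
  obtain ⟨f, rfl⟩ := Ideal.Quotient.mk_surjective a
  induction f using Polynomial.induction_on with
  | C r =>
      rw [mk_C_eq, map_intCast]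
      exact hint r
  | add f g hf hg =>
      obtain ⟨r, hr⟩ := exists_add_pow_prime_eq hp
        (Ideal.Quotient.mk _ f : TP 4) (Ideal.Quotient.mk _ g)
      have h : φ (Ideal.Quotient.mk _ f + Ideal.Quotient.mk _ g)
            - (Ideal.Quotient.mk _ f + Ideal.Quotient.mk _ g) ^ pn
          = (φ (Ideal.Quotient.mk _ f) - (Ideal.Quotient.mk _ f) ^ pn)
            + (φ (Ideal.Quotient.mk _ g) - (Ideal.Quotient.mk _ g) ^ pn)
            - ((pn : ℕ) : TP 4) * (Ideal.Quotient.mk _ f * Ideal.Quotient.mk _ g * r) := by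
        rw [map_add, hr]; ring
      rw [map_add, h]
      exact J.sub_mem (J.add_mem hf hg) (J.mul_mem_right _ hpJ)
  | monomial n r hrec =>
      have h : (Ideal.Quotient.mk (Ideal.span {(X : Polynomial ℤ) ^ 4}) (C r * X ^ (n + 1)) : TP 4)
          = (Ideal.Quotient.mk _ (C r * X ^ n)) * xx 4 := by
        rw [xx, ← map_mul]
        congr 1
        ring
      rw [h]
      exact hmul _ _ hrec hgen

theorem stmt14 (k d2 : ℤ) (hk : k = 1 ∨ k = 5) (hd2 : Even d2) :
    (∀ p : Nat.Primes, 2 < (p : ℕ) →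
      (360 : ℤ) ∣ 6 * ((p : ℕ) : ℤ) ^ 2 * (((p : ℕ) : ℤ) ^ 4 - 1) * d2 +
          k ^ 2 * ((p : ℕ) : ℤ) ^ 2 * (((p : ℕ) : ℤ) ^ 2 - 1) * (((p : ℕ) : ℤ) ^ 2 - 4) ∧
      (12 : ℤ) ∣ ((p : ℕ) : ℤ) ^ 2 * (((p : ℕ) : ℤ) ^ 2 - 1)) ∧
    ∃ S : AdamsFamily 4,
      S.ψ P2 (xx 4) = (4 : TP 4) * xx 4 + (k : TP 4) * xx 4 ^ 2 + (d2 : TP 4) * xx 4 ^ 3 ∧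
      ∀ p : Nat.Primes, 2 < (p : ℕ) →
        S.ψ p (xx 4) = ((p : ℕ) : TP 4) ^ 2 * xx 4 +
          ((k * (((p : ℕ) : ℤ) ^ 2 * (((p : ℕ) : ℤ) ^ 2 - 1) / 12) : ℤ) : TP 4) * xx 4 ^ 2 +
          (((6 * ((p : ℕ) : ℤ) ^ 2 * (((p : ℕ) : ℤ) ^ 4 - 1) * d2 +
              k ^ 2 * ((p : ℕ) : ℤ) ^ 2 * (((p : ℕ) : ℤ) ^ 2 - 1) *
                (((p : ℕ) : ℤ) ^ 2 - 4)) / 360 : ℤ) : TP 4) * xx 4 ^ 3 := by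
  obtain ⟨e, he⟩ := hd2
  have key360 : ∀ n : ℤ, Odd n →
      (360 : ℤ) ∣ 6 * n ^ 2 * (n ^ 4 - 1) * d2 + k ^ 2 * n ^ 2 * (n ^ 2 - 1) * (n ^ 2 - 4) := by
    intro n hn
    obtain ⟨t, ht⟩ := d30 hn
    obtain ⟨s, hs⟩ := d360 hn
    refine ⟨t * e + k ^ 2 * s, ?_⟩
    rw [he]
    linear_combination (12 * e) * ht + k ^ 2 * hs
  have hoddp : ∀ p : Nat.Primes, (p : ℕ) ≠ 2 → Odd ((p : ℕ) : ℤ) := by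
    intro p h2
    have := p.2.odd_of_ne_two h2
    exact_mod_cast this
  -- divisibility facts for all primes
  have hd12 : ∀ p : Nat.Primes, (12 : ℤ) ∣ ((p : ℕ) : ℤ) ^ 2 * (((p : ℕ) : ℤ) ^ 2 - 1) := by
    intro p
    rcases eq_or_ne (p : ℕ) 2 with h2 | h2
    · rw [h2]; norm_num
    · exact d12 (hoddp p h2)
  have h360 : ∀ p : Nat.Primes,
      (360 : ℤ) ∣ 6 * ((p : ℕ) : ℤ) ^ 2 * (((p : ℕ) : ℤ) ^ 4 - 1) * d2 +
        k ^ 2 * ((p : ℕ) : ℤ) ^ 2 * (((p : ℕ) : ℤ) ^ 2 - 1) * (((p : ℕ) : ℤ) ^ 2 - 4) := by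
    intro p
    rcases eq_or_ne (p : ℕ) 2 with h2 | h2
    · rw [h2]
      exact ⟨d2, by push_cast; ring⟩
    · exact key360 _ (hoddp p h2)
  have hb : ∀ p : Nat.Primes,
      12 * Bco k ((p : ℕ) : ℤ) = k * (((p : ℕ) : ℤ) ^ 2 * (((p : ℕ) : ℤ) ^ 2 - 1)) := by
    intro p
    have h := Int.mul_ediv_cancel' (hd12 p)
    rw [Bco]
    linear_combination k * h
  have hc : ∀ p : Nat.Primes,
      360 * Cco k d2 ((p : ℕ) : ℤ)
        = 6 * ((p : ℕ) : ℤ) ^ 2 * (((p : ℕ) : ℤ) ^ 4 - 1) * d2 +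
          k ^ 2 * ((p : ℕ) : ℤ) ^ 2 * (((p : ℕ) : ℤ) ^ 2 - 1) * (((p : ℕ) : ℤ) ^ 2 - 4) := by
    intro p
    rw [Cco]
    exact Int.mul_ediv_cancel' (h360 p)
  constructor
  · intro p hp
    exact ⟨h360 p, hd12 p⟩
  refine ⟨⟨fun p => fam k d2 p, ?_, ?_, ?_⟩, ?_, ?_⟩
  · -- maps_ideal
    intro p a ha
    rw [Ideal.mem_span_singleton] at ha ⊢
    have hxd : xx 4 ∣ fam k d2 p (xx 4) := by
      rw [fam_x, gen]
      exact ⟨((((p : ℕ) : ℤ) ^ 2 : ℤ) : TP 4) + (Bco k ((p : ℕ) : ℤ) : TP 4) * xx 4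
        + (Cco k d2 ((p : ℕ) : ℤ) : TP 4) * xx 4 ^ 2, by ring⟩
    obtain ⟨t, rfl⟩ := ha
    rw [map_mul]
    exact hxd.mul_right _
  · -- comm
    intro p q
    apply hom_ext
    simp only [RingHom.comp_apply]
    rw [fam_x, fam_x, fam_gen, fam_gen]
    have e1 : (((p : ℕ) : ℤ) ^ 2) * (((q : ℕ) : ℤ) ^ 2)
        = (((q : ℕ) : ℤ) ^ 2) * (((p : ℕ) : ℤ) ^ 2) := mul_comm _ _
    have e2 : (((q : ℕ) : ℤ) ^ 2) * Bco k ((p : ℕ) : ℤ)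
          + Bco k ((q : ℕ) : ℤ) * ((((p : ℕ) : ℤ) ^ 2)) ^ 2
        = (((p : ℕ) : ℤ) ^ 2) * Bco k ((q : ℕ) : ℤ)
          + Bco k ((p : ℕ) : ℤ) * ((((q : ℕ) : ℤ) ^ 2)) ^ 2 := by
      apply mul_left_cancel₀ (show (12 : ℤ) ≠ 0 by norm_num)
      linear_combination (((q : ℕ) : ℤ) ^ 2 - (((q : ℕ) : ℤ) ^ 2) ^ 2) * hb p
        + ((((p : ℕ) : ℤ) ^ 2) ^ 2 - ((p : ℕ) : ℤ) ^ 2) * hb q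
    have e3 : (((q : ℕ) : ℤ) ^ 2) * Cco k d2 ((p : ℕ) : ℤ)
          + 2 * Bco k ((q : ℕ) : ℤ) * (((p : ℕ) : ℤ) ^ 2) * Bco k ((p : ℕ) : ℤ)
          + Cco k d2 ((q : ℕ) : ℤ) * ((((p : ℕ) : ℤ) ^ 2)) ^ 3
        = (((p : ℕ) : ℤ) ^ 2) * Cco k d2 ((q : ℕ) : ℤ)
          + 2 * Bco k ((p : ℕ) : ℤ) * (((q : ℕ) : ℤ) ^ 2) * Bco k ((q : ℕ) : ℤ)
          + Cco k d2 ((p : ℕ) : ℤ) * ((((q : ℕ) : ℤ) ^ 2)) ^ 3 := by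
      apply mul_left_cancel₀ (show (720 : ℤ) ≠ 0 by norm_num)
      linear_combination 2 * (((q : ℕ) : ℤ) ^ 2 - (((q : ℕ) : ℤ) ^ 2) ^ 3) * hc p
        + 2 * ((((p : ℕ) : ℤ) ^ 2) ^ 3 - ((p : ℕ) : ℤ) ^ 2) * hc q
        + 10 * (((p : ℕ) : ℤ) ^ 2 - ((q : ℕ) : ℤ) ^ 2) * 12 * Bco k ((q : ℕ) : ℤ) * hb p
        + 10 * (((p : ℕ) : ℤ) ^ 2 - ((q : ℕ) : ℤ) ^ 2) * k
          * ((((p : ℕ) : ℤ) ^ 2) ^ 2 - ((p : ℕ) : ℤ) ^ 2) * hb q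
    rw [e1, e2, e3]
  · -- frob
    intro p a
    refine frob_of_gen p.2 _ ?_ a
    rw [Ideal.mem_span_singleton, fam_x]
    rcases eq_or_ne (p : ℕ) 2 with h2 | h2
    · rw [h2]
      have hb2 : Bco k ((2 : ℕ) : ℤ) = k := by
        rw [Bco]; norm_num
      have hc2 : Cco k d2 ((2 : ℕ) : ℤ) = d2 := by
        have h : 6 * ((2 : ℕ) : ℤ) ^ 2 * (((2 : ℕ) : ℤ) ^ 4 - 1) * d2
            + k ^ 2 * ((2 : ℕ) : ℤ) ^ 2 * (((2 : ℕ) : ℤ) ^ 2 - 1) * (((2 : ℕ) : ℤ) ^ 2 - 4)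
            = 360 * d2 := by push_cast; ring
        rw [Cco, h, Int.mul_ediv_cancel_left _ (by norm_num)]
      rw [hb2, hc2, gen]
      obtain ⟨m, hm⟩ : ∃ m, k = 2 * m + 1 := by
        rcases hk with rfl | rfl
        exacts [⟨0, rfl⟩, ⟨2, rfl⟩]
      refine ⟨(2 : TP 4) * xx 4 + (m : TP 4) * xx 4 ^ 2 + (e : TP 4) * xx 4 ^ 3, ?_⟩
      rw [hm, he]
      push_cast
      ring
    rcases eq_or_ne (p : ℕ) 3 with h3 | h3
    · rw [h3]
      have hb3 : Bco k ((3 : ℕ) : ℤ) = k * 6 := by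
        rw [Bco]; norm_num
      have hc3 : Cco k d2 ((3 : ℕ) : ℤ) = 12 * d2 + k ^ 2 := by
        have h : 6 * ((3 : ℕ) : ℤ) ^ 2 * (((3 : ℕ) : ℤ) ^ 4 - 1) * d2
            + k ^ 2 * ((3 : ℕ) : ℤ) ^ 2 * (((3 : ℕ) : ℤ) ^ 2 - 1) * (((3 : ℕ) : ℤ) ^ 2 - 4)
            = 360 * (12 * d2 + k ^ 2) := by push_cast; ring
        rw [Cco, h, Int.mul_ediv_cancel_left _ (by norm_num)]
      rw [hb3, hc3, gen]
      rcases hk with rfl | rfl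
      · exact ⟨(3 : TP 4) * xx 4 + (2 : TP 4) * xx 4 ^ 2 + ((4 * d2 : ℤ) : TP 4) * xx 4 ^ 3,
          by push_cast; ring⟩
      · exact ⟨(3 : TP 4) * xx 4 + (10 : TP 4) * xx 4 ^ 2 + ((4 * d2 + 8 : ℤ) : TP 4) * xx 4 ^ 3,
          by push_cast; ring⟩
    · -- p ≥ 5
      have h5 : 5 ≤ (p : ℕ) := by
        have h2le := p.2.two_le
        have h4 : (p : ℕ) ≠ 4 := by
          intro h
          have := p.2
          rw [h] at this
          exact absurd this (by decide)
        omega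
      have hxp : xx 4 ^ (p : ℕ) = 0 := by
        rw [show (p : ℕ) = 4 + ((p : ℕ) - 4) by omega, pow_add, hx4, zero_mul]
      rw [hxp, sub_zero, gen]
      have hprime : Prime ((p : ℕ) : ℤ) := Nat.prime_iff_prime_int.mp p.2
      obtain ⟨b', hb'⟩ : ((p : ℕ) : ℤ) ∣ Bco k ((p : ℕ) : ℤ) := by
        have h1 : ((p : ℕ) : ℤ) ∣ 12 * Bco k ((p : ℕ) : ℤ) := by
          rw [hb p]
          exact ⟨k * ((p : ℕ) : ℤ) * (((p : ℕ) : ℤ) ^ 2 - 1), by ring⟩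
        rcases hprime.dvd_mul.mp h1 with h | h
        · exfalso
          have h' : (p : ℕ) ∣ 12 := by exact_mod_cast h
          exact prime_big_not_dvd_12 p.2 h5 h'
        · exact h
      obtain ⟨c', hc'⟩ : ((p : ℕ) : ℤ) ∣ Cco k d2 ((p : ℕ) : ℤ) := by
        rcases eq_or_ne (p : ℕ) 5 with h5' | h5'
        · have hceq : Cco k d2 ((p : ℕ) : ℤ) = 260 * d2 + 35 * k ^ 2 := by
            apply mul_left_cancel₀ (show (360 : ℤ) ≠ 0 by norm_num)
            rw [hc p, h5']
            push_cast
            ring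
          rw [hceq, h5']
          exact ⟨52 * d2 + 7 * k ^ 2, by push_cast; ring⟩
        · have h1 : ((p : ℕ) : ℤ) ∣ 360 * Cco k d2 ((p : ℕ) : ℤ) := by
            rw [hc p]
            exact ⟨((p : ℕ) : ℤ) * (6 * (((p : ℕ) : ℤ) ^ 4 - 1) * d2)
              + ((p : ℕ) : ℤ) * (k ^ 2 * (((p : ℕ) : ℤ) ^ 2 - 1) * (((p : ℕ) : ℤ) ^ 2 - 4)),
              by ring⟩
          rcases hprime.dvd_mul.mp h1 with h | h
          · exfalso
            have h' : (p : ℕ) ∣ 360 := by exact_mod_cast h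
            exact prime_big_not_dvd_360 p.2 h5 h5' h'
          · exact h
      refine ⟨(((p : ℕ) : ℤ) : TP 4) * xx 4 + ((b' : ℤ) : TP 4) * xx 4 ^ 2
        + ((c' : ℤ) : TP 4) * xx 4 ^ 3, ?_⟩
      rw [hb', hc']
      push_cast
      ring
  · -- value at 2
    show fam k d2 P2 (xx 4) = _
    rw [fam_x, gen]
    have hb2 : Bco k ((P2 : ℕ) : ℤ) = k := by
      rw [Bco]; norm_num [P2]
    have hc2 : Cco k d2 ((P2 : ℕ) : ℤ) = d2 := by
      have h : 6 * ((P2 : ℕ) : ℤ) ^ 2 * (((P2 : ℕ) : ℤ) ^ 4 - 1) * d2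
          + k ^ 2 * ((P2 : ℕ) : ℤ) ^ 2 * (((P2 : ℕ) : ℤ) ^ 2 - 1) * (((P2 : ℕ) : ℤ) ^ 2 - 4)
          = 360 * d2 := by norm_num [P2]
      rw [Cco, h, Int.mul_ediv_cancel_left _ (by norm_num)]
    rw [hb2, hc2]
    have hP : ((P2 : ℕ) : ℤ) = 2 := by norm_num [P2]
    rw [hP]
    push_cast
    ring
  · -- value at odd primes
    intro p hp
    show fam k d2 p (xx 4) = _
    rw [fam_x, gen, Bco, Cco]
    push_cast
    ring
end
end

section
/- Let n ≥ 3 be an integer, and for each prime p and each 1 ≤ i ≤ n − 2 let a_{p,i} be an integer with a_{p,1} ≠ 0 for every prime p. Then the set of isomorphism classes of filtered λ-ring structures R on ℤ[x]/(xⁿ) satisfying ψ_p^R(x) ≡ a_{p,1}x + a_{p,2}x² + ⋯ + a_{p,n−2}x^{n−2} (mod x^{n−1}) for all primes p is finite, of cardinality at most min{|a_{p,1}^{n−1} − a_{p,1}| : p prime}. -/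
open Polynomial

noncomputable section

namespace Aux
variable {n : ℕ}

lemma xx_pow (k : ℕ) :
    xx n ^ k = Ideal.Quotient.mk (Ideal.span {(X : ℤ[X]) ^ n}) (X ^ k) := by
  simp [xx, map_pow]

lemma cast_eq (t : ℤ) :
    (t : TP n) = Ideal.Quotient.mk (Ideal.span {(X : ℤ[X]) ^ n}) (C t) := by
  have : (C t : ℤ[X]) = (t : ℤ[X]) := by simp
  rw [this, map_intCast]

lemma xx_pow_eq_zero {k : ℕ} (hk : n ≤ k) : xx n ^ k = 0 := by
  rw [xx_pow, Ideal.Quotient.eq_zero_iff_mem, Ideal.mem_span_singleton]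
  exact pow_dvd_pow _ hk

lemma cast_mul_top_inj (hn : 1 ≤ n) {t s : ℤ}
    (h : (t : TP n) * xx n ^ (n-1) = (s : TP n) * xx n ^ (n-1)) : t = s := by
  by_contra hts
  have h2 : Ideal.Quotient.mk (Ideal.span {(X : ℤ[X]) ^ n}) (C t * X ^ (n-1))
      = Ideal.Quotient.mk (Ideal.span {(X : ℤ[X]) ^ n}) (C s * X ^ (n-1)) := by
    rw [map_mul, map_mul, ← cast_eq, ← cast_eq, ← xx_pow]; exact h
  rw [Ideal.Quotient.eq] at h2
  rw [Ideal.mem_span_singleton] at h2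
  have hne : (C t * X ^ (n-1) - C s * X ^ (n-1) : ℤ[X]) ≠ 0 := by
    have : (C t * X ^ (n-1) - C s * X ^ (n-1) : ℤ[X]) = C (t - s) * X ^ (n-1) := by
      rw [map_sub]; ring
    rw [this]
    exact mul_ne_zero (Polynomial.C_ne_zero.mpr (sub_ne_zero_of_ne hts)) (pow_ne_zero _ X_ne_zero)
  have hdeg := Polynomial.natDegree_le_of_dvd h2 hne
  rw [natDegree_X_pow] at hdeg
  have : (C t * X ^ (n-1) - C s * X ^ (n-1) : ℤ[X]) = C (t - s) * X ^ (n-1) := by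
    rw [map_sub]; ring
  rw [this, natDegree_C_mul (by simpa using sub_ne_zero_of_ne hts), natDegree_X_pow] at hdeg
  omega

lemma exists_top (hn : 1 ≤ n) (e : TP n) :
    ∃ t : ℤ, xx n ^ (n-1) * e = (t : TP n) * xx n ^ (n-1) := by
  obtain ⟨E, rfl⟩ := Ideal.Quotient.mk_surjective e
  obtain ⟨c, hc⟩ : ∃ c, E.coeff 0 = c := ⟨_, rfl⟩
  refine ⟨c, ?_⟩
  rw [xx_pow, cast_eq, ← map_mul, ← map_mul, Ideal.Quotient.eq, Ideal.mem_span_singleton]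
  have h1 : (X : ℤ[X]) ∣ E - C c := by rw [X_dvd_iff]; simp [hc]
  obtain ⟨E', hE'⟩ := h1
  have hE : (E : ℤ[X]) = C c + X * E' := by rw [← hE']; ring
  have key : (X ^ (n-1) * E - C c * X ^ (n-1) : ℤ[X]) = X ^ (n-1) * X * E' := by
    rw [hE]; ring
  rw [key, ← pow_succ]
  have h2 : n - 1 + 1 = n := by omega
  rw [h2]
  exact Dvd.intro _ rfl

lemma pow_aux (c : ℤ) (v : TP n) :
    ∀ k, ∃ w, ((c : TP n) * xx n + xx n ^ 2 * v) ^ k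
      = (c ^ k : ℤ) * xx n ^ k + xx n ^ (k+1) * w := by
  intro k
  induction k with
  | zero => exact ⟨0, by simp⟩
  | succ k ih =>
    obtain ⟨w, hw⟩ := ih
    refine ⟨(c ^ k : ℤ) * v + (c : TP n) * w + xx n * (w * v), ?_⟩
    rw [pow_succ, hw]
    push_cast
    ring

lemma pow_top (hn : 3 ≤ n) {y : TP n} {c : ℤ} (v : TP n)
    (hy : y = (c : TP n) * xx n + xx n ^ 2 * v) :
    y ^ (n-1) = (c ^ (n-1) : ℤ) * xx n ^ (n-1) := by
  obtain ⟨w, hw⟩ := pow_aux c v (n-1)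
  rw [hy, hw]
  have : n - 1 + 1 = n := by omega
  rw [this, xx_pow_eq_zero (le_refl n)]
  simp

lemma add_pow_eq {A T : TP n} (hAT : A * T = 0) (hTT : T * T = 0) :
    ∀ k, 2 ≤ k → (A + T) ^ k = A ^ k := by
  intro k hk
  obtain ⟨j, rfl⟩ : ∃ j, k = j + 2 := ⟨k - 2, by omega⟩
  clear hk
  induction j with
  | zero =>
    have h2 : (A + T) ^ (0+2) = A ^ (0+2) + 2 * (A * T) + T * T := by ring
    rw [h2, hAT, hTT]; ring
  | succ j ih =>
    have : (A + T) ^ (j + 1 + 2) = (A + T) ^ (j + 2) * (A + T) := by ring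
    rw [this, ih]
    have hA : A ^ (j + 2) * T = A ^ (j+1) * (A * T) := by ring
    have : A ^ (j + 2) * (A + T) = A ^ (j + 3) + A ^ (j+2) * T := by ring
    rw [this, hA, hAT]
    ring_nf

lemma hom_ext {K : Type*} [CommRing K] {f g : TP n →+* K}
    (h : f (xx n) = g (xx n)) : f = g := by
  rw [← RingHom.cancel_right (Ideal.Quotient.mk_surjective
    (I := Ideal.span {(X : ℤ[X]) ^ n}))]
  apply Polynomial.ringHom_ext
  · intro a
    have : (C a : ℤ[X]) = (a : ℤ[X]) := by simp
    simp only [RingHom.comp_apply, this, map_intCast]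
  · exact h

def subst (y : TP n) (hy : y ^ n = 0) : TP n →+* TP n :=
  Ideal.Quotient.lift _ (Polynomial.aeval y).toRingHom (by
    intro f hf
    rw [Ideal.mem_span_singleton] at hf
    obtain ⟨g, rfl⟩ := hf
    simp [map_mul, map_pow, hy])

lemma subst_mk (y : TP n) (hy : y ^ n = 0) (f : ℤ[X]) :
    subst y hy (Ideal.Quotient.mk _ f) = Polynomial.aeval y f := rfl

lemma subst_xx (y : TP n) (hy : y ^ n = 0) : subst y hy (xx n) = y := by
  rw [xx, subst_mk]; simp

lemma xx_mul_top (hn : 3 ≤ n) (t : ℤ) : xx n * ((t : TP n) * xx n ^ (n-1)) = 0 := by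
  have h1 : xx n * xx n ^ (n-1) = xx n ^ n := by
    rw [← pow_succ']
    congr 1
    omega
  calc xx n * ((t : TP n) * xx n ^ (n-1)) = (t : TP n) * (xx n * xx n ^ (n-1)) := by ring
    _ = (t : TP n) * xx n ^ n := by rw [h1]
    _ = 0 := by rw [xx_pow_eq_zero (le_refl n)]; ring

lemma top_mul_top (hn : 3 ≤ n) (s t : ℤ) :
    ((s : TP n) * xx n ^ (n-1)) * ((t : TP n) * xx n ^ (n-1)) = 0 := by
  have h1 : xx n ^ (n-1) * xx n ^ (n-1) = xx n ^ (n-1+(n-1)) := by rw [pow_add]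
  have h2 : xx n ^ (n-1+(n-1)) = 0 := xx_pow_eq_zero (by omega)
  calc ((s : TP n) * xx n ^ (n-1)) * ((t : TP n) * xx n ^ (n-1))
      = (s : TP n) * (t:TP n) * (xx n ^ (n-1) * xx n ^ (n-1)) := by ring
    _ = 0 := by rw [h1, h2]; ring

lemma S_mul_top (hn : 3 ≤ n) (b : ℕ → ℤ) :
    (∑ i ∈ Finset.Icc 1 (n-2), (b i : TP n) * xx n ^ i) * xx n ^ (n-1) = 0 := by
  rw [Finset.sum_mul]
  apply Finset.sum_eq_zero
  intro i hi
  rw [Finset.mem_Icc] at hi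
  have : xx n ^ i * xx n ^ (n-1) = 0 := by
    rw [← pow_add]; exact xx_pow_eq_zero (by omega)
  calc (b i : TP n) * xx n ^ i * xx n ^ (n-1) = (b i : TP n) * (xx n ^ i * xx n ^ (n-1)) := by ring
    _ = 0 := by rw [this]; ring

lemma Icc_insert (hn : 3 ≤ n) :
    Finset.Icc 1 (n-2) = insert 1 (Finset.Icc 2 (n-2)) := by
  ext x
  simp only [Finset.mem_Icc, Finset.mem_insert]
  omega

lemma S_decomp (hn : 3 ≤ n) (b : ℕ → ℤ) (t : ℤ) :
    ∃ v, (∑ i ∈ Finset.Icc 1 (n-2), (b i : TP n) * xx n ^ i) + (t : TP n) * xx n ^ (n-1)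
      = (b 1 : TP n) * xx n + xx n ^ 2 * v := by
  refine ⟨(∑ i ∈ Finset.Icc 2 (n-2), (b i : TP n) * xx n ^ (i-2)) + (t : TP n) * xx n ^ (n-3), ?_⟩
  rw [Icc_insert hn, Finset.sum_insert (by simp)]
  rw [mul_add, Finset.mul_sum]
  have h1 : ∀ i ∈ Finset.Icc 2 (n-2), (b i : TP n) * xx n ^ i
      = xx n ^ 2 * ((b i : TP n) * xx n ^ (i-2)) := by
    intro i hi
    rw [Finset.mem_Icc] at hi
    have : xx n ^ 2 * xx n ^ (i-2) = xx n ^ i := by rw [← pow_add]; congr 1; omega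
    calc (b i : TP n) * xx n ^ i = (b i : TP n) * (xx n ^ 2 * xx n ^ (i-2)) := by rw [this]
      _ = xx n ^ 2 * ((b i : TP n) * xx n ^ (i-2)) := by ring
  rw [Finset.sum_congr rfl h1]
  have h2 : (t : TP n) * xx n ^ (n-1) = xx n ^ 2 * ((t : TP n) * xx n ^ (n-3)) := by
    have : xx n ^ 2 * xx n ^ (n-3) = xx n ^ (n-1) := by rw [← pow_add]; congr 1; omega
    rw [← this]; ring
  rw [h2]
  ring

lemma sigma_pow_n (hn : 3 ≤ n) (lam : ℤ) :
    (xx n + (lam : TP n) * xx n ^ (n-1)) ^ n = 0 := by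
  have h : xx n + (lam : TP n) * xx n ^ (n-1) = xx n * (1 + (lam : TP n) * xx n ^ (n-2)) := by
    have : xx n * xx n ^ (n-2) = xx n ^ (n-1) := by
      rw [← pow_succ']; congr 1; omega
    rw [mul_add, mul_one, ← mul_assoc, mul_comm (xx n) ((lam:TP n)), mul_assoc, this]
  rw [h, mul_pow, xx_pow_eq_zero (le_refl n), zero_mul]

def sigmaHom (hn : 3 ≤ n) (lam : ℤ) : TP n →+* TP n :=
  subst (xx n + (lam : TP n) * xx n ^ (n-1)) (sigma_pow_n hn lam)

lemma sigmaHom_xx (hn : 3 ≤ n) (lam : ℤ) :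
    sigmaHom hn lam (xx n) = xx n + (lam : TP n) * xx n ^ (n-1) :=
  subst_xx _ _

lemma sigmaHom_xx_pow_top (hn : 3 ≤ n) (lam : ℤ) :
    (xx n + (lam : TP n) * xx n ^ (n-1)) ^ (n-1) = xx n ^ (n-1) := by
  have h := pow_top hn (c := 1) (y := xx n + (lam : TP n) * xx n ^ (n-1))
      ((lam : TP n) * xx n ^ (n-3)) ?_
  · rw [h]; push_cast; ring
  · have : xx n ^ 2 * xx n ^ (n-3) = xx n ^ (n-1) := by rw [← pow_add]; congr 1; omega
    push_cast
    calc xx n + (lam : TP n) * xx n ^ (n-1) = xx n + (lam:TP n) * (xx n ^2 * xx n ^(n-3)) := by rw [this]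
      _ = 1 * xx n + xx n ^ 2 * ((lam:TP n) * xx n ^ (n-3)) := by ring

lemma sigmaHom_xx_pow (hn : 3 ≤ n) (lam : ℤ) {k : ℕ} (hk : 2 ≤ k) :
    (xx n + (lam : TP n) * xx n ^ (n-1)) ^ k = xx n ^ k :=
  add_pow_eq (xx_mul_top hn lam) (top_mul_top hn lam lam) k hk

lemma sigma_inv (hn : 3 ≤ n) (lam mu : ℤ) (h : mu = -lam) :
    (sigmaHom hn mu).comp (sigmaHom hn lam) = RingHom.id (TP n) := by
  apply hom_ext
  rw [RingHom.comp_apply, sigmaHom_xx, RingHom.id_apply, map_add, sigmaHom_xx, map_mul,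
    map_intCast, map_pow, sigmaHom_xx, sigmaHom_xx_pow_top hn mu, h]
  push_cast
  ring

def sigmaEquiv (hn : 3 ≤ n) (lam : ℤ) : TP n ≃+* TP n :=
  RingEquiv.ofRingHom (sigmaHom hn lam) (sigmaHom hn (-lam))
    (sigma_inv hn (-lam) lam (by ring))
    (sigma_inv hn lam (-lam) rfl)

lemma sigmaEquiv_toRingHom (hn : 3 ≤ n) (lam : ℤ) :
    (sigmaEquiv hn lam).toRingHom = sigmaHom hn lam := rfl

lemma sigma_maps_ideal (hn : 3 ≤ n) (lam : ℤ) :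
    (Ideal.span {xx n}).map (sigmaEquiv hn lam).toRingHom = Ideal.span {xx n} := by
  rw [sigmaEquiv_toRingHom, Ideal.map_span, Set.image_singleton, sigmaHom_xx]
  apply le_antisymm
  · rw [Ideal.span_singleton_le_span_singleton]
    refine ⟨1 + (lam : TP n) * xx n ^ (n-2), ?_⟩
    have : xx n * xx n ^ (n-2) = xx n ^ (n-1) := by rw [← pow_succ']; congr 1; omega
    rw [mul_add, mul_one, ← mul_assoc, mul_comm (xx n) ((lam:TP n)), mul_assoc, this]
  · rw [Ideal.span_singleton_le_span_singleton]
    refine ⟨1 - (lam : TP n) * xx n ^ (n-2), ?_⟩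
    have h1 : xx n * xx n ^ (n-2) = xx n ^ (n-1) := by rw [← pow_succ']; congr 1; omega
    have h2 : xx n ^ (n-1) * xx n ^ (n-2) = 0 := by
      rw [← pow_add]; exact xx_pow_eq_zero (by omega)
    have expand : (xx n + (lam : TP n) * xx n ^ (n-1)) * (1 - (lam : TP n) * xx n ^ (n-2))
        = xx n + (lam:TP n) * xx n ^ (n-1) - (lam:TP n) * (xx n * xx n ^ (n-2))
          - (lam:TP n) * (lam:TP n) * (xx n ^ (n-1) * xx n ^ (n-2)) := by ring
    rw [expand, h1, h2]
    ring

lemma sigma_S (hn : 3 ≤ n) (lam : ℤ) (b : ℕ → ℤ) :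
    sigmaHom hn lam (∑ i ∈ Finset.Icc 1 (n-2), (b i : TP n) * xx n ^ i)
      = (∑ i ∈ Finset.Icc 1 (n-2), (b i : TP n) * xx n ^ i)
        + (b 1 * lam : ℤ) * xx n ^ (n-1) := by
  rw [map_sum]
  have h1 : ∀ i ∈ Finset.Icc 1 (n-2), sigmaHom hn lam ((b i : TP n) * xx n ^ i)
      = (b i : TP n) * (xx n + (lam : TP n) * xx n ^ (n-1)) ^ i := by
    intro i hi
    rw [map_mul, map_intCast, map_pow, sigmaHom_xx]
  rw [Finset.sum_congr rfl h1, Icc_insert hn, Finset.sum_insert (by simp),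
    Finset.sum_insert (by simp), pow_one]
  have h2 : ∀ i ∈ Finset.Icc 2 (n-2), (b i : TP n) * (xx n + (lam : TP n) * xx n ^ (n-1)) ^ i
      = (b i : TP n) * xx n ^ i := by
    intro i hi
    rw [Finset.mem_Icc] at hi
    rw [sigmaHom_xx_pow hn lam hi.1]
  rw [Finset.sum_congr rfl h2, pow_one]
  push_cast
  ring

lemma prime_dvd (hn : 3 ≤ n) (p : ℕ) (hp : 2 ≤ p) (b : ℕ → ℤ) (t : ℤ)
    (h : ((∑ i ∈ Finset.Icc 1 (n-2), (b i : TP n) * xx n ^ i) + (t : TP n) * xx n ^ (n-1))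
        - xx n ^ p ∈ Ideal.span {((p : ℕ) : TP n)}) :
    (p : ℤ) ∣ b 1 := by
  rw [Ideal.mem_span_singleton] at h
  obtain ⟨w, hw⟩ := h
  obtain ⟨W, rfl⟩ := Ideal.Quotient.mk_surjective w
  have h0 : Ideal.Quotient.mk (Ideal.span {(X : ℤ[X]) ^ n})
      ((∑ i ∈ Finset.Icc 1 (n-2), C (b i) * X ^ i) + C t * X ^ (n-1) - X ^ p
        - C (p : ℤ) * W) = 0 := by
    have hsum : Ideal.Quotient.mk (Ideal.span {(X : ℤ[X]) ^ n})
        (∑ i ∈ Finset.Icc 1 (n-2), C (b i) * X ^ i)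
        = ∑ i ∈ Finset.Icc 1 (n-2), (b i : TP n) * xx n ^ i := by
      rw [map_sum]
      apply Finset.sum_congr rfl
      intro i _
      rw [map_mul, ← cast_eq, ← xx_pow]
    have hcp : Ideal.Quotient.mk (Ideal.span {(X : ℤ[X]) ^ n}) (C (p:ℤ)) = ((p:ℕ) : TP n) := by
      rw [← cast_eq]; push_cast; ring
    rw [map_sub, map_sub, map_add, map_mul, map_mul, hsum, ← cast_eq, ← xx_pow, ← xx_pow, hcp]
    linear_combination hw
  rw [Ideal.Quotient.eq_zero_iff_mem, Ideal.mem_span_singleton] at h0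
  obtain ⟨V, hV⟩ := h0
  have hco := congrArg (fun f : ℤ[X] => f.coeff 1) hV
  simp only [coeff_sub, coeff_add] at hco
  have e1 : (∑ i ∈ Finset.Icc 1 (n-2), C (b i) * X ^ i).coeff 1 = b 1 := by
    rw [Polynomial.finset_sum_coeff]
    rw [Finset.sum_eq_single 1]
    · simp
    · intro i hi hne
      rw [coeff_C_mul, coeff_X_pow, if_neg (fun hh => hne hh.symm)]
      ring
    · intro hmem
      exact absurd (Finset.mem_Icc.mpr ⟨le_refl 1, by omega⟩) hmem
  have e2 : (C t * X ^ (n-1) : ℤ[X]).coeff 1 = 0 := by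
    rw [coeff_C_mul, coeff_X_pow, if_neg (by omega)]
    ring
  have e3 : ((X : ℤ[X]) ^ p).coeff 1 = 0 := by
    rw [coeff_X_pow, if_neg (by omega)]
  have e4 : (C (p:ℤ) * W).coeff 1 = (p:ℤ) * W.coeff 1 := by
    rw [coeff_C_mul]
  have e5 : ((X : ℤ[X]) ^ n * V).coeff 1 = 0 := by
    rw [mul_comm, Polynomial.coeff_mul_X_pow', if_neg (by omega)]
  simp only [e1, e2, e3, e4, e5] at hco
  exact ⟨W.coeff 1, by linarith⟩

lemma d_ne (hn : 3 ≤ n) {p : ℕ} (hp : 2 ≤ p) {c : ℤ} (hc : (p:ℤ) ∣ c) (hc0 : c ≠ 0) :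
    c ^ (n-1) - c ≠ 0 := by
  intro h
  have h1 : c ^ (n-1) = c := by linarith [sub_eq_zero.mp h]
  have h2 : c ^ (n-2) * c = 1 * c := by
    rw [one_mul, ← h1, ← pow_succ]
    congr 1
    omega
  have h3 : c ^ (n-2) = 1 := mul_right_cancel₀ hc0 h2
  have h4 : c ∣ 1 := by
    rw [← h3]; exact dvd_pow_self c (by omega)
  have h5 : (p:ℤ) ∣ 1 := hc.trans h4
  have h6 := Int.le_of_dvd one_pos h5
  omega

end Aux

theorem stmt16 (n : ℕ) (hn : 3 ≤ n) (a : Nat.Primes → ℕ → ℤ)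
    (ha : ∀ p : Nat.Primes, a p 1 ≠ 0) :
    Finite (Quot (fun (R S : {R : AdamsFamily n //
        ∀ p : Nat.Primes,
          R.ψ p (xx n) - ∑ i ∈ Finset.Icc 1 (n - 2), (a p i : TP n) * xx n ^ i
            ∈ Ideal.span {xx n ^ (n - 1)}}) => AdamsIso R.1 S.1)) ∧
    Nat.card (Quot (fun (R S : {R : AdamsFamily n //
        ∀ p : Nat.Primes,
          R.ψ p (xx n) - ∑ i ∈ Finset.Icc 1 (n - 2), (a p i : TP n) * xx n ^ i
            ∈ Ideal.span {xx n ^ (n - 1)}}) => AdamsIso R.1 S.1)) ≤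
      sInf {m : ℕ | ∃ p : Nat.Primes, m = (a p 1 ^ (n - 1) - a p 1).natAbs} := by
  classical
  set Sub := {R : AdamsFamily n //
        ∀ p : Nat.Primes,
          R.ψ p (xx n) - ∑ i ∈ Finset.Icc 1 (n - 2), (a p i : TP n) * xx n ^ i
            ∈ Ideal.span {xx n ^ (n - 1)}} with hSub
  set rel : Sub → Sub → Prop := fun R S => AdamsIso R.1 S.1 with hrel
  set m := sInf {m : ℕ | ∃ p : Nat.Primes, m = (a p 1 ^ (n - 1) - a p 1).natAbs} with hm
  by_cases hE : Nonempty Sub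
  · obtain ⟨R0⟩ := hE
    -- extract the top coefficient B
    have hrep : ∀ (r : Sub) (q : Nat.Primes), ∃ t : ℤ,
        r.1.ψ q (xx n) = (∑ i ∈ Finset.Icc 1 (n - 2), (a q i : TP n) * xx n ^ i)
          + (t : TP n) * xx n ^ (n-1) := by
      intro r q
      have h := r.2 q
      rw [Ideal.mem_span_singleton] at h
      obtain ⟨e, he⟩ := h
      obtain ⟨t, ht⟩ := Aux.exists_top (by omega) e
      refine ⟨t, ?_⟩
      have := sub_eq_iff_eq_add.mp he
      rw [this, ht]
      ring
    choose B hB using hrep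
    -- pow facts
    have hpow_top : ∀ (r : Sub) (q : Nat.Primes),
        (r.1.ψ q (xx n)) ^ (n-1) = ((a q 1) ^ (n-1) : ℤ) * xx n ^ (n-1) := by
      intro r q
      obtain ⟨v, hv⟩ := Aux.S_decomp hn (a q) (B r q)
      exact Aux.pow_top hn v ((hB r q).trans hv)
    have hpow_i : ∀ (r : Sub) (q : Nat.Primes) (i : ℕ), 2 ≤ i →
        (r.1.ψ q (xx n)) ^ i = (∑ j ∈ Finset.Icc 1 (n - 2), (a q j : TP n) * xx n ^ j) ^ i := by
      intro r q i hi
      rw [hB r q]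
      refine Aux.add_pow_eq ?_ (Aux.top_mul_top hn _ _) i hi
      calc (∑ j ∈ Finset.Icc 1 (n - 2), (a q j : TP n) * xx n ^ j) * ((B r q : TP n) * xx n ^ (n-1))
          = (B r q : TP n) * ((∑ j ∈ Finset.Icc 1 (n - 2), (a q j : TP n) * xx n ^ j) * xx n ^ (n-1)) := by
            ring
        _ = 0 := by rw [Aux.S_mul_top hn]; ring
    -- composite value
    have hGside : ∀ (r : Sub) (p q : Nat.Primes),
        r.1.ψ p (r.1.ψ q (xx n))
          = (∑ i ∈ Finset.Icc 1 (n - 2),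
              (a q i : TP n) * (∑ j ∈ Finset.Icc 1 (n - 2), (a p j : TP n) * xx n ^ j) ^ i)
            + ((a q 1 * B r p + a p 1 ^ (n-1) * B r q : ℤ) : TP n) * xx n ^ (n-1) := by
      intro r p q
      rw [hB r q, map_add, map_mul, map_intCast, map_pow, hpow_top r p, map_sum]
      have h1 : ∀ i ∈ Finset.Icc 1 (n - 2),
          r.1.ψ p ((a q i : TP n) * xx n ^ i) = (a q i : TP n) * (r.1.ψ p (xx n)) ^ i := by
        intro i _
        rw [map_mul, map_intCast, map_pow]
      rw [Finset.sum_congr rfl h1]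
      have hsplit : (∑ i ∈ Finset.Icc 1 (n - 2), (a q i : TP n) * (r.1.ψ p (xx n)) ^ i)
          - (∑ i ∈ Finset.Icc 1 (n - 2),
              (a q i : TP n) * (∑ j ∈ Finset.Icc 1 (n - 2), (a p j : TP n) * xx n ^ j) ^ i)
          = (a q 1 : TP n) * ((B r p : TP n) * xx n ^ (n-1)) := by
        rw [← Finset.sum_sub_distrib]
        rw [Finset.sum_eq_single_of_mem 1 (Finset.mem_Icc.mpr ⟨le_refl 1, by omega⟩)]
        · rw [pow_one, pow_one, hB r p]
          ring
        · intro i hi hne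
          rw [Finset.mem_Icc] at hi
          rw [hpow_i r p i (by omega)]
          ring
      have hgoal := sub_eq_iff_eq_add.mp hsplit
      rw [hgoal]
      push_cast
      ring
    -- integer commutation relation (difference form)
    have hint : ∀ (r s : Sub) (p q : Nat.Primes),
        a q 1 * B r p + a p 1 ^ (n-1) * B r q - (a p 1 * B r q + a q 1 ^ (n-1) * B r p)
          = a q 1 * B s p + a p 1 ^ (n-1) * B s q - (a p 1 * B s q + a q 1 ^ (n-1) * B s p) := by
      intro r s p q
      have hr := RingHom.congr_fun (r.1.comm p q) (xx n)
      have hs := RingHom.congr_fun (s.1.comm p q) (xx n)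
      rw [RingHom.comp_apply, RingHom.comp_apply, hGside r p q, hGside r q p] at hr
      rw [RingHom.comp_apply, RingHom.comp_apply, hGside s p q, hGside s q p] at hs
      apply Aux.cast_mul_top_inj (n := n) (by omega)
      push_cast
      push_cast at hr hs
      linear_combination hr - hs
    -- choose the prime attaining the infimum
    have hmem : m ∈ {m : ℕ | ∃ p : Nat.Primes, m = (a p 1 ^ (n - 1) - a p 1).natAbs} :=
      Nat.sInf_mem ⟨_, P2, rfl⟩
    obtain ⟨p0, hp0⟩ := hmem
    -- p0 divides a p0 1, hence d ≠ 0
    have hdvd : ((p0 : ℕ) : ℤ) ∣ a p0 1 := by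
      have hf := R0.1.frob p0 (xx n)
      rw [hB R0 p0] at hf
      exact Aux.prime_dvd hn (p0 : ℕ) p0.2.two_le (a p0) (B R0 p0) hf
    have hd : a p0 1 ^ (n-1) - a p0 1 ≠ 0 := Aux.d_ne hn p0.2.two_le hdvd (ha p0)
    have hm1 : m ≠ 0 := by
      rw [hp0]
      simpa using hd
    -- the key isomorphism construction
    have hiso : ∀ (r s : Sub) (lam : ℤ),
        B r p0 - B s p0 = (a p0 1 ^ (n-1) - a p0 1) * lam → AdamsIso r.1 s.1 := by
      intro r s lam hlam
      have hdelta : ∀ q : Nat.Primes, B r q - B s q = (a q 1 ^ (n-1) - a q 1) * lam := by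
        intro q
        have H := hint r s p0 q
        have hd' : a p0 1 ^ (n-1) - a p0 1 ≠ 0 := hd
        apply mul_left_cancel₀ hd'
        linear_combination H + (a q 1 ^ (n-1) - a q 1) * hlam
      refine ⟨Aux.sigmaEquiv hn lam, Aux.sigma_maps_ideal hn lam, ?_⟩
      intro q
      rw [Aux.sigmaEquiv_toRingHom]
      apply Aux.hom_ext
      rw [RingHom.comp_apply, RingHom.comp_apply]
      rw [hB r q, map_add, Aux.sigma_S hn lam (a q), map_mul, map_intCast, map_pow,
        Aux.sigmaHom_xx, Aux.sigmaHom_xx_pow_top hn lam]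
      rw [map_add, map_mul, map_intCast, map_pow, hpow_top s q, hB s q]
      have hints : B r q = B s q + (a q 1 ^ (n-1) - a q 1) * lam := by linarith [hdelta q]
      have hc := congrArg (fun z : ℤ => (z : TP n)) hints
      push_cast
      push_cast at hc
      linear_combination (hc) * xx n ^ (n-1)
    -- the surjection from ZMod m
    haveI : NeZero m := ⟨hm1⟩
    set f : ZMod m → Quot rel := fun z =>
      if h : ∃ r : Sub, ((B r p0 : ℤ) : ZMod m) = z then Quot.mk rel h.choose
      else Quot.mk rel R0 with hf
    have hfsurj : Function.Surjective f := by
      intro qq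
      obtain ⟨r, rfl⟩ := Quot.exists_rep qq
      refine ⟨((B r p0 : ℤ) : ZMod m), ?_⟩
      simp only [hf]
      have hex : ∃ r' : Sub, ((B r' p0 : ℤ) : ZMod m) = ((B r p0 : ℤ) : ZMod m) := ⟨r, rfl⟩
      refine (dif_pos hex).trans ?_
      apply Quot.sound
      have hch : ((B hex.choose p0 : ℤ) : ZMod m) = ((B r p0 : ℤ) : ZMod m) := hex.choose_spec
      have hmod : (m : ℤ) ∣ B hex.choose p0 - B r p0 := by
        have := (ZMod.intCast_eq_intCast_iff _ _ _).mp hch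
        exact (Int.ModEq.dvd this.symm)
      have hd2 : (a p0 1 ^ (n-1) - a p0 1) ∣ B hex.choose p0 - B r p0 := by
        apply Int.natAbs_dvd.mp
        rw [← hp0]
        exact hmod
      obtain ⟨lam, hlam⟩ := hd2
      exact hiso hex.choose r lam hlam
    refine ⟨Finite.of_surjective f hfsurj, ?_⟩
    calc Nat.card (Quot rel) ≤ Nat.card (ZMod m) := Nat.card_le_card_of_surjective f hfsurj
      _ = m := Nat.card_zmod m
  · haveI : IsEmpty Sub := not_nonempty_iff.mp hE
    haveI : IsEmpty (Quot rel) := by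
      constructor
      intro q
      induction q using Quot.ind with
      | _ r => exact IsEmpty.false r
    exact ⟨inferInstance, by simp [Nat.card_of_isEmpty]⟩
end
end
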